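/- Let r, s, k, ℓ ≥ 0 with k ≥ ℓ and r ≥ k - ℓ, and let V_1,…,V_{s+r} be pairwise disjoint sets of size n each. Let 𝕊 ⊆ V_1 × ⋯ × V_s be a family of transversals that are pairwise ℓ-disjoint (any two distinct members share at most ℓ-1 coordinates as sets). Then there exists a family 𝔽 ⊆ V_1 × ⋯ × V_{s+r} such that: (1) the restriction of every F ∈ 𝔽 to the first s coordinates lies in 𝕊; (2) |𝔽| ≥ c·|𝕊|·n^{k-ℓ} for some constant c = c(r,s,k) > 0; (3) for all distinct F_1, F_2 ∈ 𝔽, if |F_1 ∩ F_2| ≥ k (as sets of vertices) then the number of indices i with s+1 ≤ i ≤ s+r and F_1(i) = F_2(i) is at most k - ℓ - 1. -/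
import Mathlib

open Finset

private lemma choose_le_two_pow (a b : ℕ) : a.choose b ≤ 2 ^ a := by
  rcases le_or_gt b a with h | h
  · calc a.choose b ≤ ∑ j ∈ Finset.range (a + 1), a.choose j :=
        Finset.single_le_sum (f := fun j => a.choose j) (fun _ _ => Nat.zero_le _)
          (Finset.mem_range.2 (Nat.lt_succ_of_le h))
    _ = 2 ^ a := Nat.sum_range_choose a
  · rw [Nat.choose_eq_zero_of_lt h]; exact Nat.zero_le _

private lemma exists_indep {α : Type*} [DecidableEq α] (Bad : α → α → Prop)
    [DecidableRel Bad] (hsym : ∀ x y, Bad x y → Bad y x) (hirr : ∀ x, ¬ Bad x x) (D : ℕ) :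
    ∀ A : Finset α, (∀ a ∈ A, (A.filter (fun x => Bad a x)).card ≤ D) →
      ∃ S ⊆ A, (∀ x ∈ S, ∀ y ∈ S, ¬ Bad x y) ∧ A.card ≤ S.card * (D + 1) := by
  intro A
  induction A using Finset.strongInduction with
  | _ A ih =>
    intro hdeg
    rcases A.eq_empty_or_nonempty with rfl | ⟨a, ha⟩
    · exact ⟨∅, by simp⟩
    · have hA'sub : ((A.erase a).filter (fun x => ¬ Bad a x)) ⊆ A :=
        (Finset.filter_subset _ _).trans (Finset.erase_subset _ _)
      set A' : Finset α := (A.erase a).filter (fun x => ¬ Bad a x) with hA'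
      have hss : A' ⊂ A := by
        refine (Finset.ssubset_iff_of_subset hA'sub).2 ⟨a, ha, ?_⟩
        intro hmem
        exact (Finset.notMem_erase a A) ((Finset.filter_subset _ _) hmem)
      obtain ⟨S', hS'sub, hS'ind, hS'card⟩ := ih A' hss (fun b hb => by
        refine le_trans (Finset.card_le_card ?_) (hdeg b (hA'sub hb))
        exact Finset.filter_subset_filter _ hA'sub)
      have haS' : a ∉ S' := fun h => Finset.notMem_erase a A ((Finset.filter_subset _ _) (hS'sub h))
      refine ⟨insert a S', ?_, ?_, ?_⟩
      · intro x hx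
        rcases Finset.mem_insert.1 hx with rfl | hx
        · exact ha
        · exact hA'sub (hS'sub hx)
      · intro x hx y hy
        rcases Finset.mem_insert.1 hx with hx' | hx'
        · rcases Finset.mem_insert.1 hy with hy' | hy'
          · subst hx'; subst hy'; exact hirr _
          · subst hx'; exact (Finset.mem_filter.1 (hS'sub hy')).2
        · rcases Finset.mem_insert.1 hy with hy' | hy'
          · subst hy'; exact fun h => (Finset.mem_filter.1 (hS'sub hx')).2 (hsym _ _ h)
          · exact hS'ind x hx' y hy' 
      · have hcover : A ⊆ insert a (A.filter (fun x => Bad a x) ∪ A') := by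
          intro x hx
          by_cases hxa : x = a
          · simp [hxa]
          · by_cases hbad : Bad a x
            · exact Finset.mem_insert_of_mem (Finset.mem_union_left _ (Finset.mem_filter.2 ⟨hx, hbad⟩))
            · exact Finset.mem_insert_of_mem (Finset.mem_union_right _
                (Finset.mem_filter.2 ⟨Finset.mem_erase.2 ⟨hxa, hx⟩, hbad⟩))
        have h1 : A.card ≤ 1 + (D + A'.card) := by
          calc A.card ≤ (insert a (A.filter (fun x => Bad a x) ∪ A')).card :=
                Finset.card_le_card hcover
            _ ≤ (A.filter (fun x => Bad a x) ∪ A').card + 1 := Finset.card_insert_le _ _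
            _ ≤ ((A.filter (fun x => Bad a x)).card + A'.card) + 1 :=
                Nat.add_le_add_right (Finset.card_union_le _ _) 1
            _ ≤ 1 + (D + A'.card) := by
                have := hdeg a ha
                omega
        rw [Finset.card_insert_of_notMem haS', add_mul, one_mul]
        calc A.card ≤ 1 + (D + A'.card) := h1
          _ = A'.card + (D + 1) := by omega
          _ ≤ S'.card * (D + 1) + (D + 1) := Nat.add_le_add_right hS'card _


theorem stmt_9 (r s k l : ℕ) (hlk : l ≤ k) (hr : k - l ≤ r) :
    ∃ c : ℝ, 0 < c ∧ ∃ N : ℕ, ∀ n ≥ N, ∀ V : Fin (s + r) → Finset ℕ,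
      (∀ i, (V i).card = n) → (∀ i j, i ≠ j → Disjoint (V i) (V j)) →
      ∀ 𝓢 : Finset (Fin s → ℕ),
        (∀ f ∈ 𝓢, ∀ i : Fin s, f i ∈ V (Fin.castAdd r i)) →
        (∀ f ∈ 𝓢, ∀ g ∈ 𝓢, f ≠ g →
          ((Finset.univ.image f) ∩ (Finset.univ.image g)).card < l) →
        ∃ 𝓕 : Finset (Fin (s + r) → ℕ),
          (∀ f ∈ 𝓕, ∀ i, f i ∈ V i) ∧
          (∀ f ∈ 𝓕, (fun i : Fin s => f (Fin.castAdd r i)) ∈ 𝓢) ∧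
          c * (𝓢.card * (n : ℝ) ^ (k - l)) ≤ 𝓕.card ∧
          (∀ f ∈ 𝓕, ∀ g ∈ 𝓕, f ≠ g →
            k ≤ ((Finset.univ.image f) ∩ (Finset.univ.image g)).card →
            (Finset.univ.filter fun i : Fin (s + r) => s ≤ i.val ∧ f i = g i).card
              < k - l) := by
  classical
  set C3 : ℕ := 2 ^ r + l * 2 ^ (s + r) with hC3
  refine ⟨1 / ((C3 : ℝ) + 1), by positivity, 1, ?_⟩
  intro n hn V hV hdisj 𝓢 hS1 hS2
  have hn1 : 1 ≤ n := hn
  -- basic disjointness consequence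
  have hVdisj' : ∀ (i j : Fin (s + r)) (x : ℕ), x ∈ V i → x ∈ V j → i = j := by
    intro i j x hi hj
    by_contra hne
    exact (Finset.disjoint_left.1 (hdisj i j hne) hi) hj
  set T : Finset (Fin r → ℕ) := Fintype.piFinset (fun i => V (Fin.natAdd s i)) with hTdef
  have hTcard : T.card = n ^ r := by
    rw [hTdef, Fintype.card_piFinset]
    simp [hV, Finset.prod_const, Finset.card_univ]
  set app : (Fin s → ℕ) × (Fin r → ℕ) → (Fin (s + r) → ℕ) := fun p => Fin.append p.1 p.2
    with happdef
  have happinj : Function.Injective app := by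
    intro p q h
    have h1 : p.1 = q.1 := funext fun j => by
      have := congrFun h (Fin.castAdd r j)
      simpa [happdef, Fin.append_left] using this
    have h2 : p.2 = q.2 := funext fun j => by
      have := congrFun h (Fin.natAdd s j)
      simpa [happdef, Fin.append_right] using this
    exact Prod.ext h1 h2
  set E : Finset (Fin (s + r) → ℕ) := (𝓢 ×ˢ T).image app with hEdef
  have hEcard : E.card = 𝓢.card * n ^ r := by
    rw [hEdef, Finset.card_image_of_injective _ happinj, Finset.card_product, hTcard]
  have hrep : ∀ F ∈ E, ∃ f t, f ∈ 𝓢 ∧ t ∈ T ∧ F = Fin.append f t := by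
    intro F hF
    obtain ⟨p, hp, hpe⟩ := Finset.mem_image.1 hF
    exact ⟨p.1, p.2, (Finset.mem_product.1 hp).1, (Finset.mem_product.1 hp).2, hpe.symm⟩
  have hmemV : ∀ F ∈ E, ∀ i, F i ∈ V i := by
    intro F hF i
    obtain ⟨f, t, hf, ht, rfl⟩ := hrep F hF
    refine Fin.addCases (fun j => ?_) (fun j => ?_) i
    · rw [Fin.append_left]; exact hS1 f hf j
    · rw [Fin.append_right]
      rw [hTdef] at ht
      exact Fintype.mem_piFinset.1 ht j
  -- agreement counters
  set jC : (Fin s → ℕ) → (Fin s → ℕ) → ℕ :=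
    fun f g => (univ.filter fun i => f i = g i).card with hjC
  set aC : (Fin r → ℕ) → (Fin r → ℕ) → ℕ :=
    fun t t' => (univ.filter fun i => t i = t' i).card with haC
  have hTail : ∀ (f : Fin s → ℕ) (t : Fin r → ℕ) (g : Fin s → ℕ) (t' : Fin r → ℕ),
      (univ.filter fun i : Fin (s + r) =>
        s ≤ i.val ∧ Fin.append f t i = Fin.append g t' i).card = aC t t' := by
    intro f t g t'
    rw [Finset.card_filter, Fin.sum_univ_add]
    have e1 : ∀ j : Fin s,
        (if s ≤ (Fin.castAdd r j).val ∧
            Fin.append f t (Fin.castAdd r j) = Fin.append g t' (Fin.castAdd r j)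
          then 1 else 0) = 0 := by
      intro j
      have hns : ¬ s ≤ (Fin.castAdd r j).val := by
        simp only [Fin.coe_castAdd]
        omega
      simp [hns]
    have e2 : ∀ j : Fin r,
        (if s ≤ (Fin.natAdd s j).val ∧
            Fin.append f t (Fin.natAdd s j) = Fin.append g t' (Fin.natAdd s j)
          then 1 else 0) = (if t j = t' j then 1 else 0) := by
      intro j
      have hs : s ≤ (Fin.natAdd s j).val := by
        simp only [Fin.coe_natAdd]
        omega
      simp [hs, Fin.append_right]
    rw [Finset.sum_congr rfl (fun j _ => e1 j), Finset.sum_congr rfl (fun j _ => e2 j)]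
    simp only [Finset.sum_const_zero, zero_add]
    rw [haC, ← Finset.card_filter]
  have hTot : ∀ (f : Fin s → ℕ) (t : Fin r → ℕ) (g : Fin s → ℕ) (t' : Fin r → ℕ),
      (univ.filter fun i : Fin (s + r) => Fin.append f t i = Fin.append g t' i).card
        = jC f g + aC t t' := by
    intro f t g t'
    rw [Finset.card_filter, Fin.sum_univ_add]
    have e1 : ∀ j : Fin s,
        (if Fin.append f t (Fin.castAdd r j) = Fin.append g t' (Fin.castAdd r j)
          then 1 else 0) = (if f j = g j then 1 else 0) := by
      intro j
      simp [Fin.append_left]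
    have e2 : ∀ j : Fin r,
        (if Fin.append f t (Fin.natAdd s j) = Fin.append g t' (Fin.natAdd s j)
          then 1 else 0) = (if t j = t' j then 1 else 0) := by
      intro j
      simp [Fin.append_right]
    rw [Finset.sum_congr rfl (fun j _ => e1 j), Finset.sum_congr rfl (fun j _ => e2 j)]
    rw [hjC, haC]
    rw [← Finset.card_filter, ← Finset.card_filter]
  have hInter : ∀ F G : Fin (s + r) → ℕ, (∀ i, F i ∈ V i) → (∀ i, G i ∈ V i) →
      ((univ.image F) ∩ (univ.image G)).card ≤ (univ.filter fun i => F i = G i).card := by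
    intro F G hF hG
    have hsub : (univ.image F) ∩ (univ.image G) ⊆ (univ.filter fun i => F i = G i).image F := by
      intro v hv
      obtain ⟨hvF, hvG⟩ := Finset.mem_inter.1 hv
      obtain ⟨i, -, hi⟩ := Finset.mem_image.1 hvF
      obtain ⟨i', -, hi'⟩ := Finset.mem_image.1 hvG
      have hii : i = i' := hVdisj' i i' v (hi ▸ hF i) (hi' ▸ hG i')
      subst hii
      exact Finset.mem_image.2 ⟨i, Finset.mem_filter.2 ⟨Finset.mem_univ _, by rw [hi, hi']⟩, hi⟩
    exact (Finset.card_le_card hsub).trans Finset.card_image_le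
  have hHead : ∀ g1 ∈ 𝓢, ∀ g2 ∈ 𝓢,
      jC g1 g2 ≤ ((univ.image g1) ∩ (univ.image g2)).card := by
    intro g1 hg1 g2 hg2
    refine Finset.card_le_card_of_injOn (fun i => g1 i) ?_ ?_
    · intro i hi
      have hieq : g1 i = g2 i := (Finset.mem_filter.1 hi).2
      exact Finset.mem_inter.2 ⟨Finset.mem_image.2 ⟨i, Finset.mem_univ _, rfl⟩,
        Finset.mem_image.2 ⟨i, Finset.mem_univ _, hieq.symm⟩⟩
    · intro i _ i' _ h
      have h1 := hS1 g1 hg1 i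
      have h2 := hS1 g1 hg1 i'
      have h' : g1 i = g1 i' := h
      have := hVdisj' (Fin.castAdd r i) (Fin.castAdd r i') (g1 i) h1 (by rw [h']; exact h2)
      have hv := congrArg Fin.val this
      simp only [Fin.coe_castAdd] at hv
      exact Fin.ext hv
  have hjlt : ∀ f0 ∈ 𝓢, ∀ g ∈ 𝓢, g ≠ f0 → jC f0 g < l := by
    intro f0 hf0 g hg hne
    exact lt_of_le_of_lt (hHead f0 hf0 g hg) (hS2 f0 hf0 g hg (Ne.symm hne))
  -- L1 : counting tails with many agreements
  have hL1 : ∀ (t0 : Fin r → ℕ) (b : ℕ), b ≤ r →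
      (T.filter fun t2 => b ≤ aC t0 t2).card ≤ 2 ^ r * n ^ (r - b) := by
    intro t0 b hb
    have hcov : (T.filter fun t2 => b ≤ aC t0 t2) ⊆
        (Finset.powersetCard b (univ : Finset (Fin r))).biUnion
          (fun A => Fintype.piFinset fun i =>
            if i ∈ A then ({t0 i} : Finset ℕ) else V (Fin.natAdd s i)) := by
      intro t2 ht2
      obtain ⟨ht2T, hbA⟩ := Finset.mem_filter.1 ht2
      have hbA' : b ≤ (univ.filter fun i => t0 i = t2 i).card := hbA
      obtain ⟨A, hAsub, hAcard⟩ := Finset.exists_subset_card_eq hbA'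
      refine Finset.mem_biUnion.2 ⟨A, Finset.mem_powersetCard.2
        ⟨(hAsub.trans (Finset.filter_subset _ _)), hAcard⟩,
        Fintype.mem_piFinset.2 fun i => ?_⟩
      by_cases hiA : i ∈ A
      · simp only [if_pos hiA, Finset.mem_singleton]
        exact ((Finset.mem_filter.1 (hAsub hiA)).2).symm
      · simp only [if_neg hiA]
        rw [hTdef] at ht2T
        exact Fintype.mem_piFinset.1 ht2T i
    refine le_trans (Finset.card_le_card hcov) (le_trans Finset.card_biUnion_le ?_)
    have hpc : ∀ A ∈ Finset.powersetCard b (univ : Finset (Fin r)),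
        (Fintype.piFinset fun i =>
          if i ∈ A then ({t0 i} : Finset ℕ) else V (Fin.natAdd s i)).card = n ^ (r - b) := by
      intro A hA
      obtain ⟨-, hAcard⟩ := Finset.mem_powersetCard.1 hA
      rw [Fintype.card_piFinset]
      have hcongr : ∀ i : Fin r,
          (if i ∈ A then ({t0 i} : Finset ℕ) else V (Fin.natAdd s i)).card
            = if i ∈ A then 1 else n := by
        intro i
        by_cases hi : i ∈ A <;> simp [hi, hV]
      rw [Finset.prod_congr rfl (fun i _ => hcongr i), ← Finset.prod_mul_prod_compl A]
      have hA1 : (∏ i ∈ A, if i ∈ A then 1 else n) = 1 := by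
        rw [Finset.prod_congr rfl (fun i hi => if_pos hi)]
        exact Finset.prod_const_one
      have hA2 : (∏ i ∈ Aᶜ, if i ∈ A then 1 else n) = n ^ (r - b) := by
        rw [Finset.prod_congr rfl (fun i hi => if_neg (Finset.mem_compl.1 hi))]
        rw [Finset.prod_const, Finset.card_compl, hAcard]
        congr 1
        simp
      rw [hA1, hA2, one_mul]
    rw [Finset.sum_congr rfl hpc, Finset.sum_const, Finset.card_powersetCard, smul_eq_mul]
    have := choose_le_two_pow ((univ : Finset (Fin r)).card) b
    refine Nat.mul_le_mul ?_ le_rfl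
    simpa using this
  -- L2 : counting heads with given agreement count
  have hL2 : ∀ f0 ∈ 𝓢, ∀ j : ℕ, j < l →
      ((𝓢.erase f0).filter fun g => jC f0 g = j).card ≤ 2 ^ s * n ^ (l - j) := by
    intro f0 hf0 j hj
    have hcov : ((𝓢.erase f0).filter fun g => jC f0 g = j) ⊆
        (Finset.powersetCard j (univ : Finset (Fin s))).biUnion
          (fun J => (𝓢.erase f0).filter fun g => ∀ i ∈ J, g i = f0 i) := by
      intro g hg
      obtain ⟨hg1, hg2⟩ := Finset.mem_filter.1 hg
      have hg2' : (univ.filter fun i => f0 i = g i).card = j := hg2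
      refine Finset.mem_biUnion.2 ⟨univ.filter (fun i => f0 i = g i),
        Finset.mem_powersetCard.2 ⟨Finset.filter_subset _ _, hg2'⟩,
        Finset.mem_filter.2 ⟨hg1, fun i hi => ((Finset.mem_filter.1 hi).2).symm⟩⟩
    refine le_trans (Finset.card_le_card hcov) (le_trans Finset.card_biUnion_le ?_)
    have hone : ∀ J ∈ Finset.powersetCard j (univ : Finset (Fin s)),
        ((𝓢.erase f0).filter fun g => ∀ i ∈ J, g i = f0 i).card ≤ n ^ (l - j) := by
      intro J hJ
      obtain ⟨-, hJcard⟩ := Finset.mem_powersetCard.1 hJ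
      have hjs : j ≤ s := by
        rw [← hJcard]
        simpa using Finset.card_le_card (Finset.subset_univ J)
      have hJc : ((univ : Finset (Fin s)) \ J).card = s - j := by
        rw [Finset.card_sdiff_of_subset (Finset.subset_univ J), hJcard]
        simp
      obtain ⟨J', hJ'sub, hJ'card⟩ :=
        Finset.exists_subset_card_eq (show min l s - j ≤ ((univ : Finset (Fin s)) \ J).card by
          rw [hJc]; omega)
      refine le_trans (Finset.card_le_card_of_injOn
        (t := Fintype.piFinset fun i : Fin s =>
          if i ∈ J' then V (Fin.castAdd r i) else ({0} : Finset ℕ))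
        (fun g => fun i => if i ∈ J' then g i else 0) ?_ ?_) ?_
      · intro g hg
        refine Fintype.mem_piFinset.2 fun i => ?_
        by_cases hi : i ∈ J'
        · simp only [if_pos hi]
          exact hS1 g ((Finset.erase_subset _ _) (Finset.mem_filter.1 hg).1) i
        · simp [hi]
      · intro g1 hg1 g2 hg2 heq
        simp only [Finset.coe_filter, Set.mem_setOf_eq] at hg1 hg2
        obtain ⟨hg1m, hg1J⟩ := hg1
        obtain ⟨hg2m, hg2J⟩ := hg2
        have hg1S : g1 ∈ 𝓢 := (Finset.erase_subset _ _) hg1m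
        have hg2S : g2 ∈ 𝓢 := (Finset.erase_subset _ _) hg2m
        have hJ'eq : ∀ i ∈ J', g1 i = g2 i := by
          intro i hi
          have := congrFun heq i
          simpa [if_pos hi] using this
        have hJeq : ∀ i ∈ J, g1 i = g2 i := by
          intro i hi
          rw [hg1J i hi, hg2J i hi]
        by_contra hne
        have hsubJJ : J ∪ J' ⊆ univ.filter (fun i => g1 i = g2 i) := by
          intro i hi
          rcases Finset.mem_union.1 hi with h | h
          · exact Finset.mem_filter.2 ⟨Finset.mem_univ _, hJeq i h⟩
          · exact Finset.mem_filter.2 ⟨Finset.mem_univ _, hJ'eq i h⟩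
        have hdisJJ : Disjoint J J' := Finset.disjoint_left.2 fun i hiJ hiJ' =>
          (Finset.mem_sdiff.1 (hJ'sub hiJ')).2 hiJ
        have hcardJJ : (J ∪ J').card = j + (min l s - j) := by
          rw [Finset.card_union_of_disjoint hdisJJ, hJcard, hJ'card]
        have hagg : min l s ≤ jC g1 g2 := by
          have hcle := Finset.card_le_card hsubJJ
          rw [hcardJJ] at hcle
          have : jC g1 g2 = (univ.filter fun i => g1 i = g2 i).card := rfl
          omega
        have hlt : jC g1 g2 < l :=
          lt_of_le_of_lt (hHead g1 hg1S g2 hg2S) (hS2 g1 hg1S g2 hg2S hne)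
        rcases le_total l s with hls | hsl
        · rw [min_eq_left hls] at hagg
          omega
        · rw [min_eq_right hsl] at hagg
          have hcf : (univ.filter fun i => g1 i = g2 i).card = Fintype.card (Fin s) := by
            have h1 : (univ.filter fun i => g1 i = g2 i).card ≤ s := by
              simpa using Finset.card_le_card
                (Finset.filter_subset (fun i => g1 i = g2 i) univ)
            have h2 : jC g1 g2 = (univ.filter fun i => g1 i = g2 i).card := rfl
            simp only [Fintype.card_fin]
            omega
          have huniv := Finset.eq_univ_of_card _ hcf
          have hall : ∀ i, g1 i = g2 i := by
            intro i
            have hmem : i ∈ univ.filter (fun i => g1 i = g2 i) := by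
              rw [huniv]; exact Finset.mem_univ i
            exact (Finset.mem_filter.1 hmem).2
          exact hne (funext hall)
      · rw [Fintype.card_piFinset]
        have hcongr : ∀ i : Fin s,
            (if i ∈ J' then V (Fin.castAdd r i) else ({0} : Finset ℕ)).card
              = if i ∈ J' then n else 1 := by
          intro i
          by_cases hi : i ∈ J' <;> simp [hi, hV]
        rw [Finset.prod_congr rfl (fun i _ => hcongr i), ← Finset.prod_mul_prod_compl J']
        have hA1 : (∏ i ∈ J', if i ∈ J' then n else 1) = n ^ (min l s - j) := by
          rw [Finset.prod_congr rfl (fun i hi => if_pos hi), Finset.prod_const, hJ'card]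
        have hA2 : (∏ i ∈ J'ᶜ, if i ∈ J' then n else 1) = 1 := by
          rw [Finset.prod_congr rfl (fun i hi => if_neg (Finset.mem_compl.1 hi))]
          exact Finset.prod_const_one
        rw [hA1, hA2, mul_one]
        exact Nat.pow_le_pow_right hn1 (by omega)
    refine le_trans (Finset.sum_le_sum hone) ?_
    rw [Finset.sum_const, Finset.card_powersetCard, smul_eq_mul]
    refine Nat.mul_le_mul ?_ le_rfl
    have := choose_le_two_pow ((univ : Finset (Fin s)).card) j
    simpa using this
  -- the conflict relation
  set Bad : (Fin (s + r) → ℕ) → (Fin (s + r) → ℕ) → Prop := fun F G =>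
    F ≠ G ∧ k ≤ ((univ.image F) ∩ (univ.image G)).card ∧
      k - l ≤ (univ.filter fun i : Fin (s + r) => s ≤ i.val ∧ F i = G i).card with hBad
  have hsym : ∀ F G, Bad F G → Bad G F := by
    intro F G hb
    obtain ⟨h1, h2, h3⟩ := hb
    refine ⟨h1.symm, by rwa [Finset.inter_comm], ?_⟩
    have he : (univ.filter fun i : Fin (s + r) => s ≤ i.val ∧ G i = F i)
        = (univ.filter fun i : Fin (s + r) => s ≤ i.val ∧ F i = G i) := by
      apply Finset.filter_congr
      intro i _
      constructor
      · rintro ⟨hx, hy⟩; exact ⟨hx, hy.symm⟩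
      · rintro ⟨hx, hy⟩; exact ⟨hx, hy.symm⟩
    rwa [he]
  have hirr : ∀ F, ¬ Bad F F := fun F h => h.1 rfl
  have hdeg : ∀ F ∈ E, (E.filter fun G => Bad F G).card ≤ C3 * n ^ (r - (k - l)) := by
    intro F hF
    obtain ⟨f0, t0, hf0, ht0, hFeq⟩ := hrep F hF
    subst hFeq
    have hkey : ∀ g ∈ 𝓢, ∀ t2 ∈ T, Bad (Fin.append f0 t0) (Fin.append g t2) →
        max (k - l) (k - jC f0 g) ≤ aC t0 t2 := by
      intro g hg t2 ht2 hbad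
      obtain ⟨hne, hk, hm'⟩ := hbad
      have hGE : Fin.append g t2 ∈ E := by
        rw [hEdef]
        exact Finset.mem_image.2 ⟨(g, t2), Finset.mem_product.2 ⟨hg, ht2⟩, rfl⟩
      have h1 : k - l ≤ aC t0 t2 := by rw [hTail f0 t0 g t2] at hm'; exact hm'
      have h2 : k ≤ jC f0 g + aC t0 t2 := by
        have hint := hInter _ _ (hmemV _ hF) (hmemV _ hGE)
        rw [hTot f0 t0 g t2] at hint
        omega
      exact max_le h1 (by omega)
    set w : ℕ → ℕ :=
      fun j => if k - j ≤ r then 2 ^ r * n ^ (r - max (k - l) (k - j)) else 0 with hw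
    have hcnt : ∀ g ∈ 𝓢,
        (T.filter fun t2 => Bad (Fin.append f0 t0) (Fin.append g t2)).card
          ≤ w (jC f0 g) := by
      intro g hg
      by_cases hcase : k - jC f0 g ≤ r
      · have hwj : w (jC f0 g) = 2 ^ r * n ^ (r - max (k - l) (k - jC f0 g)) := by
          rw [hw]; simp only [if_pos hcase]
        rw [hwj]
        have hbr : max (k - l) (k - jC f0 g) ≤ r := max_le hr hcase
        refine le_trans (Finset.card_le_card ?_) (hL1 t0 _ hbr)
        intro t2 ht2
        obtain ⟨h1, h2⟩ := Finset.mem_filter.1 ht2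
        exact Finset.mem_filter.2 ⟨h1, hkey g hg t2 h1 h2⟩
      · have hwj : w (jC f0 g) = 0 := by
          rw [hw]; simp only [if_neg hcase]
        rw [hwj, Nat.le_zero, Finset.card_eq_zero, Finset.filter_eq_empty_iff]
        intro t2 ht2 hbad
        have hge := hkey g hg t2 ht2 hbad
        have haR : aC t0 t2 ≤ r := by
          have : (univ.filter fun i : Fin r => t0 i = t2 i).card ≤ r := by
            simpa using Finset.card_le_card
              (Finset.filter_subset (fun i : Fin r => t0 i = t2 i) univ)
          exact this
        have := le_trans (le_max_right (k - l) (k - jC f0 g)) hge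
        omega
    have hchain : (E.filter fun G => Bad (Fin.append f0 t0) G).card ≤
        ∑ g ∈ 𝓢, (T.filter fun t2 => Bad (Fin.append f0 t0) (Fin.append g t2)).card := by
      have hsub1 : (E.filter fun G => Bad (Fin.append f0 t0) G) ⊆
          𝓢.biUnion (fun g => (T.filter fun t2 =>
            Bad (Fin.append f0 t0) (Fin.append g t2)).image (fun t2 => Fin.append g t2)) := by
        intro G hG
        obtain ⟨hGE, hGbad⟩ := Finset.mem_filter.1 hG
        obtain ⟨g, t2, hg, ht2, rfl⟩ := hrep G hGE
        exact Finset.mem_biUnion.2 ⟨g, hg, Finset.mem_image.2 ⟨t2,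
          Finset.mem_filter.2 ⟨ht2, hGbad⟩, rfl⟩⟩
      refine le_trans (Finset.card_le_card hsub1) (le_trans Finset.card_biUnion_le ?_)
      exact Finset.sum_le_sum fun g _ => Finset.card_image_le
    have hwany : ∀ j : ℕ, w j ≤ 2 ^ r * n ^ (r - (k - l)) := by
      intro j
      rw [hw]
      by_cases h : k - j ≤ r
      · simp only [if_pos h]
        exact Nat.mul_le_mul_left _
          (Nat.pow_le_pow_right hn1 (Nat.sub_le_sub_left (le_max_left _ _) r))
      · simp only [if_neg h]
        exact Nat.zero_le _
    have herase : ∑ g ∈ 𝓢.erase f0, w (jC f0 g)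
        ≤ l * (2 ^ (s + r) * n ^ (r - (k - l))) := by
      have hmaps : ∀ g ∈ 𝓢.erase f0, jC f0 g ∈ Finset.range l := fun g hg =>
        Finset.mem_range.2 (hjlt f0 hf0 g ((Finset.erase_subset _ _) hg)
          ((Finset.mem_erase.1 hg).1))
      rw [← Finset.sum_fiberwise_of_maps_to hmaps (fun g => w (jC f0 g))]
      refine le_trans (Finset.sum_le_sum
        (g := fun _ => 2 ^ (s + r) * n ^ (r - (k - l))) ?_) ?_
      · intro j hj
        have hjl : j < l := Finset.mem_range.1 hj
        show ∑ g ∈ (𝓢.erase f0).filter (fun g => jC f0 g = j), w (jC f0 g)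
          ≤ 2 ^ (s + r) * n ^ (r - (k - l))
        have e : ∑ g ∈ (𝓢.erase f0).filter (fun g => jC f0 g = j), w (jC f0 g)
            = ((𝓢.erase f0).filter (fun g => jC f0 g = j)).card * w j := by
          rw [Finset.sum_congr rfl (fun g hg => by rw [(Finset.mem_filter.1 hg).2]),
            Finset.sum_const, smul_eq_mul]
        rw [e]
        by_cases hcase : k - j ≤ r
        · have hwj : w j = 2 ^ r * n ^ (r - (k - j)) := by
            rw [hw]; simp only [if_pos hcase]
            congr 2
            rw [max_eq_right (Nat.sub_le_sub_left (le_of_lt hjl) k)]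
          rw [hwj]
          calc ((𝓢.erase f0).filter (fun g => jC f0 g = j)).card * (2 ^ r * n ^ (r - (k - j)))
              ≤ (2 ^ s * n ^ (l - j)) * (2 ^ r * n ^ (r - (k - j))) :=
                Nat.mul_le_mul_right _ (hL2 f0 hf0 j hjl)
            _ = 2 ^ (s + r) * (n ^ (l - j) * n ^ (r - (k - j))) := by rw [pow_add]; ring
            _ = 2 ^ (s + r) * n ^ ((l - j) + (r - (k - j))) := by rw [← pow_add]
            _ = 2 ^ (s + r) * n ^ (r - (k - l)) := by
                congr 2
                omega
        · have hwj : w j = 0 := by rw [hw]; simp only [if_neg hcase]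
          rw [hwj, mul_zero]
          exact Nat.zero_le _
      · rw [Finset.sum_const, Finset.card_range, smul_eq_mul]
    calc (E.filter fun G => Bad (Fin.append f0 t0) G).card
        ≤ ∑ g ∈ 𝓢, (T.filter fun t2 =>
            Bad (Fin.append f0 t0) (Fin.append g t2)).card := hchain
      _ = (T.filter fun t2 => Bad (Fin.append f0 t0) (Fin.append f0 t2)).card
          + ∑ g ∈ 𝓢.erase f0, (T.filter fun t2 =>
              Bad (Fin.append f0 t0) (Fin.append g t2)).card :=
          (Finset.add_sum_erase 𝓢 _ hf0).symm
      _ ≤ w (jC f0 f0) + ∑ g ∈ 𝓢.erase f0, w (jC f0 g) :=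
          add_le_add (hcnt f0 hf0)
            (Finset.sum_le_sum fun g hg => hcnt g ((Finset.erase_subset _ _) hg))
      _ ≤ 2 ^ r * n ^ (r - (k - l)) + l * (2 ^ (s + r) * n ^ (r - (k - l))) :=
          add_le_add (hwany _) herase
      _ = C3 * n ^ (r - (k - l)) := by rw [hC3]; ring
  obtain ⟨S, hSE, hSind, hScard⟩ := exists_indep Bad hsym hirr (C3 * n ^ (r - (k - l))) E hdeg
  refine ⟨S, ?_, ?_, ?_, ?_⟩
  · exact fun F hF i => hmemV F (hSE hF) i
  · intro F hF
    obtain ⟨f0, t0, hf0, ht0, rfl⟩ := hrep F (hSE hF)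
    have he : (fun i : Fin s => Fin.append f0 t0 (Fin.castAdd r i)) = f0 :=
      funext fun i => Fin.append_left f0 t0 i
    have := hf0
    rwa [← he] at this
  · -- cardinality bound
    have hp1 : 1 ≤ n ^ (r - (k - l)) := Nat.one_le_pow _ _ (by omega)
    have hD1 : C3 * n ^ (r - (k - l)) + 1 ≤ (C3 + 1) * n ^ (r - (k - l)) := by
      rw [Nat.succ_mul]
      exact Nat.add_le_add_left hp1 _
    have hnat : 𝓢.card * n ^ (k - l) * n ^ (r - (k - l))
        ≤ S.card * (C3 + 1) * n ^ (r - (k - l)) := by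
      have h1 : 𝓢.card * n ^ r ≤ S.card * (C3 * n ^ (r - (k - l)) + 1) := hEcard ▸ hScard
      have h2 : n ^ r = n ^ (k - l) * n ^ (r - (k - l)) := by
        rw [← pow_add]; congr 1; omega
      calc 𝓢.card * n ^ (k - l) * n ^ (r - (k - l)) = 𝓢.card * n ^ r := by rw [h2]; ring
        _ ≤ S.card * (C3 * n ^ (r - (k - l)) + 1) := h1
        _ ≤ S.card * ((C3 + 1) * n ^ (r - (k - l))) := Nat.mul_le_mul_left _ hD1
        _ = S.card * (C3 + 1) * n ^ (r - (k - l)) := by ring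
    have hnat2 : 𝓢.card * n ^ (k - l) ≤ S.card * (C3 + 1) :=
      Nat.le_of_mul_le_mul_right hnat (by positivity)
    have hcast : ((𝓢.card * n ^ (k - l) : ℕ) : ℝ) ≤ ((S.card * (C3 + 1) : ℕ) : ℝ) :=
      Nat.cast_le.2 hnat2
    push_cast at hcast
    have hC3pos : (0 : ℝ) < (C3 : ℝ) + 1 := by positivity
    rw [div_mul_eq_mul_div, div_le_iff₀ hC3pos, one_mul]
    calc (𝓢.card : ℝ) * (n : ℝ) ^ (k - l) ≤ (S.card : ℝ) * ((C3 : ℝ) + 1) := hcast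
      _ = (S.card : ℝ) * ((C3 : ℝ) + 1) := rfl
  · intro F hF G hG hne hk
    by_contra hcon
    push_neg at hcon
    exact hSind F hF G hG ⟨hne, hk, hcon⟩
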